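/- Let (M,g) be a complete Riemannian manifold with a smooth vector field X satisfying Ric + (1/2) L_X g ≥ ε(n−1) g and Ric ≤ (n−1) g, where ε > 0. Let p, q ∈ M and let γ: [0, d(p,q)] → M be a unit-speed minimal geodesic from p to q. Then g(X(q), γ'(d(p,q))) ≥ −(n−1)π − |X(p)| + (n−1)ε·d(p,q). -/
import Mathlib


open Real intervalIntegral

lemma ric_int_bound (n : ℕ) (hn : 2 ≤ n) (d : ℝ) (hd : Real.pi ≤ d)
    (ric : ℝ → ℝ) (hric_cont : ContinuousOn ric (Set.Icc 0 d))
    (hRic_le : ∀ t ∈ Set.Icc (0 : ℝ) d, ric t ≤ (n : ℝ) - 1)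
    (hminimal : ∀ φ : ℝ → ℝ, φ 0 = 0 → φ d = 0 →
      (∀ t, DifferentiableAt ℝ φ t) → Continuous (deriv φ) →
      0 ≤ ∫ t in (0 : ℝ)..d, (((n : ℝ) - 1) * (deriv φ t) ^ 2 - (φ t) ^ 2 * ric t)) :
    ∫ t in (0:ℝ)..d, ric t ≤ ((n : ℝ) - 1) * Real.pi := by
  have hπ : (0:ℝ) < Real.pi := Real.pi_pos
  have hd0 : (0:ℝ) ≤ d := le_trans hπ.le hd
  have hhalf : Real.pi / 2 ≤ d / 2 := by linarith
  set ψ : ℝ → ℝ := fun t => if t ≤ d/2 then Real.cos (min t (Real.pi/2))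
      else -Real.cos (min (d - t) (Real.pi/2)) with hψdef
  have hψcont : Continuous ψ := by
    apply Continuous.if_le
    · exact Real.continuous_cos.comp (continuous_id.min continuous_const)
    · exact (Real.continuous_cos.comp
        ((continuous_const.sub continuous_id).min continuous_const)).neg
    · exact continuous_id
    · exact continuous_const
    · intro x hx
      have h1 : min x (Real.pi/2) = Real.pi/2 := min_eq_right (by rw [hx]; exact hhalf)
      have h2 : min (d - x) (Real.pi/2) = Real.pi/2 := min_eq_right (by
        have hx2 : d - x = d / 2 := by rw [hx]; ring
        rw [hx2]; exact hhalf)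
      simp [h1, h2, Real.cos_pi_div_two]
  -- pointwise formulas for ψ
  have hψ1 : ∀ t, 0 ≤ t → t ≤ Real.pi/2 → ψ t = Real.cos t := by
    intro t ht0 ht
    have h1 : t ≤ d/2 := le_trans ht hhalf
    have h2 : min t (Real.pi/2) = t := min_eq_left ht
    simp [hψdef, h1, h2]
  have hψ2 : ∀ t, Real.pi/2 ≤ t → t ≤ d - Real.pi/2 → ψ t = 0 := by
    intro t ht0 ht
    simp only [hψdef]
    split_ifs with h
    · rw [min_eq_right ht0, Real.cos_pi_div_two]
    · rw [min_eq_right (by linarith), Real.cos_pi_div_two, neg_zero]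
  have hψ3 : ∀ t, d - Real.pi/2 ≤ t → t ≤ d → ψ t = -Real.cos (d - t) := by
    intro t ht0 ht
    simp only [hψdef]
    have hdt : d - t ≤ Real.pi/2 := by linarith
    split_ifs with h
    · -- then t ≤ d/2 and t ≥ d - π/2 ≥ d/2, so t = d/2 and d = π
      have h1 : d/2 ≤ t := by linarith [hhalf]
      have ht2 : t = d/2 := le_antisymm h h1
      have hd2 : d - t = Real.pi/2 := by
        have : Real.pi/2 ≤ d - t := by rw [ht2]; linarith
        linarith
      rw [hd2, Real.cos_pi_div_two, ht2]
      rw [min_eq_right (by linarith), Real.cos_pi_div_two, neg_zero]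
    · rw [min_eq_left hdt]
  -- φ is the integral of ψ
  set φ : ℝ → ℝ := fun t => ∫ s in (0:ℝ)..t, ψ s with hφdef
  have hφderiv : ∀ t, HasDerivAt φ (ψ t) t := fun t =>
    (hψcont.integral_hasStrictDerivAt 0 t).hasDerivAt
  have hφd : deriv φ = ψ := funext fun t => (hφderiv t).deriv
  have hφ0 : φ 0 = 0 := integral_same
  -- odd symmetry of ψ about d/2
  have hodd : ∀ t, ψ (d - t) = -ψ t := by
    intro t
    simp only [hψdef]
    split_ifs with h1 h2 h2
    · -- d - t ≤ d/2 and t ≤ d/2 : t = d/2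
      have ht2 : t = d/2 := by linarith
      rw [ht2]
      have e1 : d - d/2 = d/2 := by ring
      rw [e1, min_eq_right hhalf, Real.cos_pi_div_two]
      norm_num
    · rw [neg_neg]
    · rw [sub_sub_cancel]
    · exfalso; push_neg at h1 h2; linarith
  have hφdval : φ d = 0 := by
    have h1 : (∫ x in (0:ℝ)..d, ψ (d - x)) = ∫ x in (0:ℝ)..d, ψ x := by
      rw [intervalIntegral.integral_comp_sub_left ψ d]
      norm_num
    have h2 : (∫ x in (0:ℝ)..d, ψ (d - x)) = -∫ x in (0:ℝ)..d, ψ x := by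
      rw [← intervalIntegral.integral_neg]
      exact intervalIntegral.integral_congr fun x _ => hodd x
    have : φ d = ∫ x in (0:ℝ)..d, ψ x := rfl
    rw [this]; linarith [h1, h2]
  -- explicit values of φ
  have hφ1 : ∀ t, 0 ≤ t → t ≤ Real.pi/2 → φ t = Real.sin t := by
    intro t ht0 ht
    have : φ t = ∫ s in (0:ℝ)..t, Real.cos s := by
      apply intervalIntegral.integral_congr
      intro s hs
      rw [Set.uIcc_of_le ht0] at hs
      exact hψ1 s hs.1 (le_trans hs.2 ht)
    rw [this, integral_cos, Real.sin_zero, sub_zero]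
  have hφ2 : ∀ t, Real.pi/2 ≤ t → t ≤ d - Real.pi/2 → φ t = 1 := by
    intro t ht0 ht
    have hsplit : (∫ s in (0:ℝ)..Real.pi/2, ψ s) + (∫ s in (Real.pi/2)..t, ψ s)
        = ∫ s in (0:ℝ)..t, ψ s :=
      intervalIntegral.integral_add_adjacent_intervals
        (hψcont.intervalIntegrable _ _) (hψcont.intervalIntegrable _ _)
    have h1 : (∫ s in (0:ℝ)..Real.pi/2, ψ s) = 1 := by
      have := hφ1 (Real.pi/2) (by positivity) le_rfl
      rw [Real.sin_pi_div_two] at this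
      exact this
    have h2 : (∫ s in (Real.pi/2)..t, ψ s) = 0 := by
      have : (∫ s in (Real.pi/2)..t, ψ s) = ∫ s in (Real.pi/2)..t, (0:ℝ) := by
        apply intervalIntegral.integral_congr
        intro s hs
        rw [Set.uIcc_of_le ht0] at hs
        exact hψ2 s hs.1 (le_trans hs.2 ht)
      rw [this, intervalIntegral.integral_zero]
    show (∫ s in (0:ℝ)..t, ψ s) = 1
    rw [← hsplit, h1, h2, add_zero]
  have hφ3 : ∀ t, d - Real.pi/2 ≤ t → t ≤ d → φ t = Real.sin (d - t) := by
    intro t ht0 ht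
    have hsplit : (∫ s in (0:ℝ)..(d - Real.pi/2), ψ s) + (∫ s in (d - Real.pi/2)..t, ψ s)
        = ∫ s in (0:ℝ)..t, ψ s :=
      intervalIntegral.integral_add_adjacent_intervals
        (hψcont.intervalIntegrable _ _) (hψcont.intervalIntegrable _ _)
    have h1 : (∫ s in (0:ℝ)..(d - Real.pi/2), ψ s) = 1 :=
      hφ2 (d - Real.pi/2) (by linarith) le_rfl
    have h2 : (∫ s in (d - Real.pi/2)..t, ψ s)
        = ∫ s in (d - Real.pi/2)..t, -Real.cos (d - s) := by
      apply intervalIntegral.integral_congr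
      intro s hs
      rw [Set.uIcc_of_le ht0] at hs
      exact hψ3 s hs.1 (le_trans hs.2 ht)
    have h3 : (∫ s in (d - Real.pi/2)..t, -Real.cos (d - s)) = Real.sin (d - t) - 1 := by
      rw [intervalIntegral.integral_comp_sub_left (fun u => -Real.cos u) d]
      rw [intervalIntegral.integral_neg, integral_cos]
      have : d - (d - Real.pi/2) = Real.pi/2 := by ring
      rw [this, Real.sin_pi_div_two]
      ring
    show (∫ s in (0:ℝ)..t, ψ s) = Real.sin (d - t)
    rw [← hsplit, h1, h2, h3]; ring
  -- φ² + ψ² = 1 on [0, d]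
  have hpyth : ∀ t ∈ Set.Icc (0:ℝ) d, (φ t)^2 + (ψ t)^2 = 1 := by
    rintro t ⟨ht0, htd⟩
    rcases le_or_gt t (Real.pi/2) with h | h
    · rw [hφ1 t ht0 h, hψ1 t ht0 h, Real.sin_sq_add_cos_sq]
    · rcases le_or_gt t (d - Real.pi/2) with h' | h'
      · rw [hφ2 t h.le h', hψ2 t h.le h']; norm_num
      · rw [hφ3 t h'.le htd, hψ3 t h'.le htd, neg_pow, neg_one_sq, one_mul,
          Real.sin_sq_add_cos_sq]
  -- ∫ ψ² = π/2
  have hψsq : (∫ t in (0:ℝ)..d, (ψ t)^2) = Real.pi / 2 := by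
    have hint : ∀ a b : ℝ, IntervalIntegrable (fun t => (ψ t)^2) MeasureTheory.volume a b :=
      fun a b => ((hψcont.pow 2).intervalIntegrable a b)
    have hsplit1 : (∫ t in (0:ℝ)..(Real.pi/2), (ψ t)^2)
        + (∫ t in (Real.pi/2)..(d - Real.pi/2), (ψ t)^2) =
        ∫ t in (0:ℝ)..(d - Real.pi/2), (ψ t)^2 :=
      intervalIntegral.integral_add_adjacent_intervals (hint _ _) (hint _ _)
    have hsplit2 : (∫ t in (0:ℝ)..(d - Real.pi/2), (ψ t)^2)
        + (∫ t in (d - Real.pi/2)..d, (ψ t)^2) = ∫ t in (0:ℝ)..d, (ψ t)^2 :=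
      intervalIntegral.integral_add_adjacent_intervals (hint _ _) (hint _ _)
    have h1 : (∫ t in (0:ℝ)..(Real.pi/2), (ψ t)^2) = Real.pi/4 := by
      have : (∫ t in (0:ℝ)..(Real.pi/2), (ψ t)^2)
          = ∫ t in (0:ℝ)..(Real.pi/2), (Real.cos t)^2 := by
        apply intervalIntegral.integral_congr
        intro s hs
        rw [Set.uIcc_of_le (by positivity)] at hs
        simp only [hψ1 s hs.1 hs.2]
      rw [this, integral_cos_sq]
      simp [Real.cos_pi_div_two]
      ring
    have h2 : (∫ t in (Real.pi/2)..(d - Real.pi/2), (ψ t)^2) = 0 := by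
      have : (∫ t in (Real.pi/2)..(d - Real.pi/2), (ψ t)^2)
          = ∫ t in (Real.pi/2)..(d - Real.pi/2), (0:ℝ) := by
        apply intervalIntegral.integral_congr
        intro s hs
        rw [Set.uIcc_of_le (by linarith)] at hs
        simp only [hψ2 s hs.1 hs.2]; norm_num
      rw [this, intervalIntegral.integral_zero]
    have h3 : (∫ t in (d - Real.pi/2)..d, (ψ t)^2) = Real.pi/4 := by
      have he : (∫ t in (d - Real.pi/2)..d, (ψ t)^2)
          = ∫ t in (d - Real.pi/2)..d, (Real.cos (d - t))^2 := by
        apply intervalIntegral.integral_congr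
        intro s hs
        rw [Set.uIcc_of_le (by linarith)] at hs
        simp only [hψ3 s hs.1 hs.2]; ring
      rw [he, intervalIntegral.integral_comp_sub_left (fun u => (Real.cos u)^2) d]
      have hda : d - (d - Real.pi/2) = Real.pi/2 := by ring
      rw [sub_self, hda, integral_cos_sq]
      simp [Real.cos_pi_div_two]
      ring
    linarith [hsplit1, hsplit2]
  -- apply the index form
  have hIdx := hminimal φ hφ0 hφdval (fun t => (hφderiv t).differentiableAt)
    (by rw [hφd]; exact hψcont)
  rw [show deriv φ = ψ from hφd] at hIdx
  -- integrability facts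
  have hIcc : Set.uIcc (0:ℝ) d = Set.Icc 0 d := Set.uIcc_of_le hd0
  have hricI : IntervalIntegrable ric MeasureTheory.volume 0 d := by
    apply ContinuousOn.intervalIntegrable
    rw [hIcc]; exact hric_cont
  have hφcont : Continuous φ := continuous_iff_continuousAt.mpr fun t => (hφderiv t).continuousAt
  have hφricI : IntervalIntegrable (fun t => (φ t)^2 * ric t) MeasureTheory.volume 0 d := by
    apply ContinuousOn.intervalIntegrable
    rw [hIcc]
    exact ((hφcont.pow 2).continuousOn).mul hric_cont
  have hψricI : IntervalIntegrable (fun t => (ψ t)^2 * ric t) MeasureTheory.volume 0 d := by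
    apply ContinuousOn.intervalIntegrable
    rw [hIcc]
    exact ((hψcont.pow 2).continuousOn).mul hric_cont
  have hψsqI : IntervalIntegrable (fun t => (ψ t)^2) MeasureTheory.volume 0 d :=
    (hψcont.pow 2).intervalIntegrable 0 d
  -- from the index form: ∫ φ² ric ≤ (n-1) π/2
  have hA : (∫ t in (0:ℝ)..d, (φ t)^2 * ric t) ≤ ((n:ℝ) - 1) * (Real.pi/2) := by
    have heq : (∫ t in (0:ℝ)..d, (((n : ℝ) - 1) * (ψ t) ^ 2 - (φ t) ^ 2 * ric t))
        = ((n:ℝ) - 1) * (∫ t in (0:ℝ)..d, (ψ t)^2)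
          - ∫ t in (0:ℝ)..d, (φ t)^2 * ric t := by
      rw [intervalIntegral.integral_sub (hψsqI.const_mul _) hφricI,
        intervalIntegral.integral_const_mul]
    rw [heq, hψsq] at hIdx
    linarith
  -- ∫ ψ² ric ≤ (n-1) π/2
  have hB : (∫ t in (0:ℝ)..d, (ψ t)^2 * ric t) ≤ ((n:ℝ) - 1) * (Real.pi/2) := by
    have hmono : (∫ t in (0:ℝ)..d, (ψ t)^2 * ric t)
        ≤ ∫ t in (0:ℝ)..d, ((n:ℝ) - 1) * (ψ t)^2 := by
      apply intervalIntegral.integral_mono_on hd0 hψricI (hψsqI.const_mul _)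
      intro t ht
      have h := hRic_le t ht
      nlinarith [sq_nonneg (ψ t)]
    rw [intervalIntegral.integral_const_mul, hψsq] at hmono
    exact hmono
  -- ∫ ric = ∫ φ² ric + ∫ ψ² ric
  have hsum : (∫ t in (0:ℝ)..d, ric t)
      = (∫ t in (0:ℝ)..d, (φ t)^2 * ric t) + ∫ t in (0:ℝ)..d, (ψ t)^2 * ric t := by
    rw [← intervalIntegral.integral_add hφricI hψricI]
    apply intervalIntegral.integral_congr
    intro t ht
    rw [hIcc] at ht
    show ric t = φ t ^ 2 * ric t + ψ t ^ 2 * ric t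
    linear_combination (-ric t) * (hpyth t ht)
  rw [hsum]
  calc (∫ t in (0:ℝ)..d, (φ t)^2 * ric t) + ∫ t in (0:ℝ)..d, (ψ t)^2 * ric t
      ≤ ((n:ℝ) - 1) * (Real.pi/2) + ((n:ℝ) - 1) * (Real.pi/2) := add_le_add hA hB
    _ = ((n:ℝ) - 1) * Real.pi := by ring


/-- Lemma 2.2 (the fundamental estimate): if `Ric + (1/2) L_X g ≥ ε(n−1) g`
and `Ric ≤ (n−1) g`, and `γ : [0, d(p,q)] → M` is a unit-speed minimal
geodesic from `p` to `q`, then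
`g(X(q), γ'(d(p,q))) ≥ −(n−1)π − |X(p)| + (n−1)ε·d(p,q)`.
Data along `γ`: `ric t = Ric(γ'(t), γ'(t))`, `xg t = g(X(γ(t)), γ'(t))` and
`d = d(p,q)`; `normXp = |X(p)|`, with `hCS` the Cauchy–Schwarz inequality
`|g(X(p), γ'(0))| ≤ |X(p)|`.  The hypothesis `hRicX` is the lower bound
`Ric_X(γ',γ') ≥ ε(n−1)`, using the geodesic identity
`(1/2)(L_X g)(γ',γ') = (d/dt) g(X∘γ, γ')`; `hRic_le` is `Ric ≤ (n−1)g`;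
`hminimal` records minimality of `γ` via nonnegativity of the index form. -/
theorem stmt_4 (n : ℕ) (hn : 2 ≤ n) (ε : ℝ) (hε : 0 < ε)
    (d : ℝ) (hd : 0 < d)  -- d = d(p,q)
    (ric xg : ℝ → ℝ) (normXp : ℝ)
    (hCS : |xg 0| ≤ normXp)
    (hric_cont : ContinuousOn ric (Set.Icc 0 d))
    (hxg_deriv : ∀ t, HasDerivAt xg (deriv xg t) t)
    (hxg_deriv_cont : Continuous (deriv xg))
    (hRicX : ∀ t ∈ Set.Icc (0 : ℝ) d, ε * ((n : ℝ) - 1) ≤ ric t + deriv xg t)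
    (hRic_le : ∀ t ∈ Set.Icc (0 : ℝ) d, ric t ≤ (n : ℝ) - 1)
    (hminimal : ∀ φ : ℝ → ℝ, φ 0 = 0 → φ d = 0 →
      (∀ t, DifferentiableAt ℝ φ t) → Continuous (deriv φ) →
      0 ≤ ∫ t in (0 : ℝ)..d, (((n : ℝ) - 1) * (deriv φ t) ^ 2 - (φ t) ^ 2 * ric t)) :
    -((n : ℝ) - 1) * Real.pi - normXp + ((n : ℝ) - 1) * ε * d ≤ xg d := by
  have hn1 : (1:ℝ) ≤ (n:ℝ) - 1 := by
    have : (2:ℝ) ≤ (n:ℝ) := by exact_mod_cast hn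
    linarith
  have hIcc : Set.uIcc (0:ℝ) d = Set.Icc 0 d := Set.uIcc_of_le hd.le
  have hricI : IntervalIntegrable ric MeasureTheory.volume 0 d := by
    apply ContinuousOn.intervalIntegrable
    rw [hIcc]; exact hric_cont
  -- the key Ricci integral bound
  have hricB : ∫ t in (0:ℝ)..d, ric t ≤ ((n : ℝ) - 1) * Real.pi := by
    rcases le_or_gt d Real.pi with hcase | hcase
    · calc ∫ t in (0:ℝ)..d, ric t ≤ ∫ t in (0:ℝ)..d, ((n:ℝ) - 1) := by
            apply intervalIntegral.integral_mono_on hd.le hricI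
              (intervalIntegrable_const)
            exact hRic_le
        _ = ((n:ℝ) - 1) * d := by rw [intervalIntegral.integral_const, smul_eq_mul]; ring
        _ ≤ ((n:ℝ) - 1) * Real.pi := by
            apply mul_le_mul_of_nonneg_left hcase (by linarith)
    · exact ric_int_bound n hn d hcase.le ric hric_cont hRic_le hminimal
  -- fundamental theorem of calculus for xg
  have hftc : ∫ t in (0:ℝ)..d, deriv xg t = xg d - xg 0 :=
    intervalIntegral.integral_deriv_eq_sub (fun t _ => (hxg_deriv t).differentiableAt)
      (hxg_deriv_cont.intervalIntegrable 0 d)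
  -- monotonicity
  have hmono : (∫ t in (0:ℝ)..d, (ε * ((n:ℝ) - 1) - ric t))
      ≤ ∫ t in (0:ℝ)..d, deriv xg t := by
    apply intervalIntegral.integral_mono_on hd.le
      (intervalIntegrable_const.sub hricI) (hxg_deriv_cont.intervalIntegrable 0 d)
    intro t ht
    linarith [hRicX t ht]
  have hlhs : (∫ t in (0:ℝ)..d, (ε * ((n:ℝ) - 1) - ric t))
      = ε * ((n:ℝ) - 1) * d - ∫ t in (0:ℝ)..d, ric t := by
    rw [intervalIntegral.integral_sub intervalIntegrable_const hricI,
      intervalIntegral.integral_const, smul_eq_mul]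
    ring
  have hxg0 : -normXp ≤ xg 0 := by
    have := neg_abs_le (xg 0)
    linarith
  rw [hlhs, hftc] at hmono
  nlinarith [hricB, hmono, hxg0]
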